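/- For two distinct positive integers a and b with binary representations, define the extended label L(x) of x = b_1 b_2 ... b_ℓ (binary, length ℓ) as the infinite periodic sequence repeating the block 1,0,b_1,b_1,b_2,b_2,...,b_ℓ,b_ℓ. Then there exists an index k ≤ 2·⌊log₂(min(a,b))⌋ + 6 such that the k-th symbols of L(a) and L(b) differ. -/

import Mathlib

/-- The finite block `(1,0,b₁,b₁,…,b_ℓ,b_ℓ)` of the extended label of `x`,
where `b₁…b_ℓ` is the binary representation of `x` (MSB first). -/
def extBlock (x : ℕ) : List Bool :=
  true :: false :: ((Nat.bits x).reverse.flatMap (fun b => [b, b]))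

/-- The `k`-th symbol (indices starting at 1) of the extended label of `x`,
obtained by repeating `extBlock x` indefinitely. -/
def extLabel (x k : ℕ) : Bool :=
  (extBlock x).getD ((k - 1) % (extBlock x).length) false

lemma dup_length (l : List Bool) : (l.flatMap fun b => [b, b]).length = 2 * l.length := by
  induction l with
  | nil => simp
  | cons x t ih => simp [ih]; ring

lemma dup_getD (l : List Bool) (i : ℕ) :
    (l.flatMap fun b => [b, b]).getD (2 * i) false = l.getD i false ∧
    (l.flatMap fun b => [b, b]).getD (2 * i + 1) false = l.getD i false := by
  induction l generalizing i with
  | nil => simp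
  | cons x t ih =>
    cases i with
    | zero => simp
    | succ j =>
      have h := ih j
      have e : 2 * (j + 1) = (2 * j + 1) + 1 := by ring
      simp only [List.flatMap_cons, e]
      simpa using h

lemma size_eq_log {x : ℕ} (hx : 0 < x) : Nat.size x = Nat.log 2 x + 1 := by
  apply le_antisymm
  · exact Nat.size_le.2 (Nat.lt_pow_succ_log_self (by norm_num) x)
  · exact Nat.succ_le_of_lt (Nat.lt_size.2 (Nat.pow_log_le_self 2 hx.ne'))

lemma bits_injective : ∀ a b : ℕ, a.bits = b.bits → a = b := by
  intro a
  induction a using Nat.strong_induction_on with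
  | _ a ih =>
    intro b h
    rcases Nat.eq_zero_or_pos a with rfl | hapos
    · have hlen : b.bits.length = 0 := by rw [← h]; simp
      rw [Nat.size_eq_bits_len] at hlen
      exact (Nat.size_eq_zero.1 hlen).symm
    · have hodd : a.bodd = b.bodd := by
        rw [Nat.bodd_eq_bits_head, Nat.bodd_eq_bits_head, h]
      have htail : a.div2.bits = b.div2.bits := by
        rw [Nat.div2_bits_eq_tail, Nat.div2_bits_eq_tail, h]
      have hlt : a.div2 < a := by
        rw [Nat.div2_val]; exact Nat.div_lt_self hapos (by norm_num)
      have hdiv : a.div2 = b.div2 := ih _ hlt _ htail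
      have := Nat.bodd_add_div2 a
      rw [hodd, hdiv, Nat.bodd_add_div2 b] at this
      exact this.symm

lemma extBlock_length {x : ℕ} (hx : 0 < x) :
    (extBlock x).length = 2 * Nat.log 2 x + 4 := by
  simp only [extBlock, List.length_cons, dup_length, List.length_reverse,
    Nat.size_eq_bits_len, size_eq_log hx]
  ring

lemma extBlock_getD_bit (x i : ℕ) :
    (extBlock x).getD (2 * i + 2) false = (Nat.bits x).reverse.getD i false ∧
    (extBlock x).getD (2 * i + 3) false = (Nat.bits x).reverse.getD i false := by
  have h := dup_getD (Nat.bits x).reverse i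
  constructor
  · simpa [extBlock, show 2 * i + 2 = (2 * i) + 1 + 1 by ring] using h.1
  · simpa [extBlock, show 2 * i + 3 = (2 * i + 1) + 1 + 1 by ring] using h.2

lemma key (a b : ℕ) (ha : 0 < a) (hb : 0 < b) (hs : Nat.size a < Nat.size b) :
    ∃ k : ℕ, 1 ≤ k ∧ k ≤ 2 * Nat.log 2 (min a b) + 6 ∧ extLabel a k ≠ extLabel b k := by
  have hab : a < b :=
    lt_of_lt_of_le (Nat.lt_size_self a) (Nat.lt_size.1 hs)
  have hmin : min a b = a := min_eq_left hab.le
  set La := (extBlock a).length with hLa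
  set Lb := (extBlock b).length with hLb
  have hLa' : La = 2 * Nat.log 2 a + 4 := extBlock_length ha
  have hLb' : Lb = 2 * Nat.log 2 b + 4 := extBlock_length hb
  have hlog : Nat.log 2 a < Nat.log 2 b := by
    have := hs
    rw [size_eq_log ha, size_eq_log hb] at this
    omega
  have hLaLb : La + 1 < Lb := by omega
  have hLa2 : 2 ≤ La := by omega
  -- a's label at positions La+1, La+2
  have ha1 : extLabel a (La + 1) = true := by
    unfold extLabel
    rw [← hLa]
    simp [Nat.add_sub_cancel, Nat.mod_self, extBlock]
  have ha2 : extLabel a (La + 2) = false := by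
    unfold extLabel
    rw [← hLa]
    have : (La + 2 - 1) % La = 1 := by
      have : La + 2 - 1 = La + 1 := by omega
      rw [this, Nat.add_mod_left]
      exact Nat.mod_eq_of_lt (by omega)
    rw [this]
    simp [extBlock]
  -- b's label at positions La+1, La+2 : the same bit twice
  have hsa : La = 2 * (Nat.log 2 a + 1) + 2 := by omega
  have hb1 : extLabel b (La + 1) = (Nat.bits b).reverse.getD (Nat.log 2 a + 1) false := by
    unfold extLabel
    rw [← hLb]
    have : (La + 1 - 1) % Lb = 2 * (Nat.log 2 a + 1) + 2 := by
      rw [Nat.add_sub_cancel, Nat.mod_eq_of_lt (by omega)]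
      omega
    rw [this]
    exact (extBlock_getD_bit b (Nat.log 2 a + 1)).1
  have hb2 : extLabel b (La + 2) = (Nat.bits b).reverse.getD (Nat.log 2 a + 1) false := by
    unfold extLabel
    rw [← hLb]
    have : (La + 2 - 1) % Lb = 2 * (Nat.log 2 a + 1) + 3 := by
      have e : La + 2 - 1 = La + 1 := by omega
      rw [e, Nat.mod_eq_of_lt (by omega)]
      omega
    rw [this]
    exact (extBlock_getD_bit b (Nat.log 2 a + 1)).2
  by_cases hcase : extLabel a (La + 1) = extLabel b (La + 1)
  · refine ⟨La + 2, by omega, by rw [hmin]; omega, ?_⟩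
    rw [ha2, hb2, ← hb1, ← hcase, ha1]
    simp
  · exact ⟨La + 1, by omega, by rw [hmin]; omega, hcase⟩

theorem extended_labels_differ (a b : ℕ) (ha : 0 < a) (hb : 0 < b) (hab : a ≠ b) :
    ∃ k : ℕ, 1 ≤ k ∧ k ≤ 2 * Nat.log 2 (min a b) + 6 ∧ extLabel a k ≠ extLabel b k := by
  rcases lt_trichotomy (Nat.size a) (Nat.size b) with hs | hs | hs
  · exact key a b ha hb hs
  · -- equal sizes: bits differ at some position
    have hlog : Nat.log 2 a = Nat.log 2 b := by
      have := hs
      rw [size_eq_log ha, size_eq_log hb] at this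
      omega
    set la := (Nat.bits a).reverse with hla
    set lb := (Nat.bits b).reverse with hlb
    have hlen : la.length = lb.length := by
      simp only [hla, hlb, List.length_reverse, Nat.size_eq_bits_len]
      exact hs
    have hne : la ≠ lb := by
      intro h
      exact hab (bits_injective a b (List.reverse_injective h))
    have hex : ∃ i, i < la.length ∧ la.getD i false ≠ lb.getD i false := by
      by_contra hc
      push_neg at hc
      apply hne
      apply List.ext_getElem hlen
      intro i h1 h2
      have := hc i h1
      rwa [List.getD_eq_getElem la false h1, List.getD_eq_getElem lb false h2] at this
    obtain ⟨i, hi, hdiff⟩ := hex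
    have hilen : i < Nat.log 2 a + 1 := by
      have : la.length = Nat.log 2 a + 1 := by
        simp only [hla, List.length_reverse, Nat.size_eq_bits_len, size_eq_log ha]
      omega
    refine ⟨2 * i + 3, by omega, ?_, ?_⟩
    · rcases min_cases a b with ⟨h, _⟩ | ⟨h, _⟩ <;> rw [h] <;> omega
    · have hma : (2 * i + 3 - 1) % (extBlock a).length = 2 * i + 2 := by
        rw [extBlock_length ha]
        have e : 2 * i + 3 - 1 = 2 * i + 2 := by omega
        rw [e]; exact Nat.mod_eq_of_lt (by omega)
      have hmb : (2 * i + 3 - 1) % (extBlock b).length = 2 * i + 2 := by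
        rw [extBlock_length hb, ← hlog]
        have e : 2 * i + 3 - 1 = 2 * i + 2 := by omega
        rw [e]; exact Nat.mod_eq_of_lt (by omega)
      unfold extLabel
      rw [hma, hmb, (extBlock_getD_bit a i).1, (extBlock_getD_bit b i).1]
      exact hdiff
  · obtain ⟨k, h1, h2, h3⟩ := key b a hb ha hs
    exact ⟨k, h1, by rwa [min_comm], fun h => h3 h.symm⟩
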